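/- Let K be a perfect field of characteristic p > 0 and let W ⊆ K[[x_1,...,x_n]] be a K-vector subspace of finite dimension d that is invariant under all Cartier operators Λ_j for j ∈ {0,...,p-1}^n. Then for every f ∈ W, the diagonal Δ(f) ∈ K[[x]] is algebraic over K(x) of degree at most p^d. -/

import Mathlib

/-- The Cartier operator `Λ_j` on multivariate power series over a perfect field of
characteristic `p`: `Λ_j(∑ a(i) x^i) = ∑ a(p i + j)^{1/p} x^i`. -/
noncomputable def cartierOp {n : ℕ} {K : Type*} [Field K] (p : ℕ) [ExpChar K p]
    [PerfectRing K p] (j : Fin n →₀ ℕ) (f : MvPowerSeries (Fin n) K) :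
    MvPowerSeries (Fin n) K :=
  fun i => (frobeniusEquiv K p).symm (MvPowerSeries.coeff (p • i + j) f)

/-- The diagonal `Δ(f)(t) = ∑ a(m,…,m) t^m` of a multivariate power series. -/
noncomputable def diagonal {n : ℕ} {K : Type*} [CommSemiring K]
    (f : MvPowerSeries (Fin n) K) : PowerSeries K :=
  PowerSeries.mk fun m =>
    MvPowerSeries.coeff (Finsupp.equivFunOnFinite.symm fun _ => m) f

open PowerSeries

section Helpers

variable {K : Type*} [Field K] (p : ℕ) [hp : Fact p.Prime] [CharP K p]

lemma ps_coeff_pow_char (g : PowerSeries K) (m : ℕ) :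
    PowerSeries.coeff m (g ^ p) =
      if p ∣ m then (PowerSeries.coeff (m / p) g) ^ p else 0 := by
  haveI : CharP (PowerSeries K) p :=
    charP_of_injective_ringHom PowerSeries.C_injective p
  haveI : ExpChar (PowerSeries K) p := .prime hp.out
  haveI : ExpChar K p := .prime hp.out
  have hp0 : 0 < p := hp.out.pos
  set q : Polynomial K := trunc (m + 1) g with hqdef
  have hlow : ∀ k, k ≤ m →
      PowerSeries.coeff k ((q : PowerSeries K)) = PowerSeries.coeff k g := by
    intro k hk
    rw [Polynomial.coeff_coe, hqdef, coeff_trunc, if_pos (Nat.lt_succ_of_le hk)]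
  have hsplit : g ^ p = ((q : PowerSeries K)) ^ p + (g - q) ^ p := by
    have h := add_pow_char (R := PowerSeries K) (p := p) (q : PowerSeries K) (g - q)
    rwa [add_sub_cancel] at h
  have hvan : PowerSeries.coeff m ((g - (q : PowerSeries K)) ^ p) = 0 := by
    have hdvd : (PowerSeries.X : PowerSeries K) ^ ((m + 1) * p) ∣ (g - q) ^ p := by
      rw [pow_mul]
      apply pow_dvd_pow_of_dvd
      rw [PowerSeries.X_pow_dvd_iff]
      intro k hk
      rw [map_sub, hlow k (Nat.lt_succ_iff.mp hk), sub_self]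
    rw [PowerSeries.X_pow_dvd_iff] at hdvd
    exact hdvd m (by nlinarith)
  rw [hsplit, map_add, hvan, add_zero, ← Polynomial.coe_pow, Polynomial.coeff_coe,
    ← Polynomial.map_frobenius_expand p q, Polynomial.coeff_map, Polynomial.coeff_expand hp0]
  split_ifs with h
  · rw [frobenius_def, ← hlow (m / p) (Nat.div_le_self m p), Polynomial.coeff_coe]
  · rw [map_zero]

variable [ExpChar K p] [PerfectRing K p]

/-- One-variable Cartier operator. -/
noncomputable def cart1 (j : ℕ) (g : PowerSeries K) : PowerSeries K :=
  PowerSeries.mk fun m => (frobeniusEquiv K p).symm (PowerSeries.coeff (p * m + j) g)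

lemma cart1_decomp (g : PowerSeries K) :
    ∑ j ∈ Finset.range p, (cart1 p j g) ^ p * (PowerSeries.X : PowerSeries K) ^ j = g := by
  have hp0 : 0 < p := hp.out.pos
  ext m
  rw [map_sum, Finset.sum_eq_single (m % p)]
  · have h1 : m % p ≤ m := Nat.mod_le m p
    have h0 := Nat.div_add_mod m p
    have h2 : m - m % p = p * (m / p) := by omega
    rw [PowerSeries.coeff_mul_X_pow', if_pos h1, ps_coeff_pow_char, h2,
      if_pos (Dvd.intro _ rfl), Nat.mul_div_cancel_left _ hp0]
    rw [cart1, coeff_mk, frobeniusEquiv_symm_pow_p, h0]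
  · intro j hj hne
    rw [PowerSeries.coeff_mul_X_pow']
    split_ifs with hle
    · rw [ps_coeff_pow_char, if_neg]
      rintro ⟨k, hk⟩
      apply hne
      have hjm : m = p * k + j := by omega
      rw [hjm, Nat.mul_add_mod, Nat.mod_eq_of_lt (Finset.mem_range.mp hj)]
    · rfl
  · intro h
    exact absurd (Finset.mem_range.mpr (Nat.mod_lt _ hp0)) h

end Helpers

noncomputable def cart1' (p : ℕ) {K : Type*} [Field K] [ExpChar K p] [PerfectRing K p]
    (j : ℕ) (g : PowerSeries K) : PowerSeries K :=
  PowerSeries.mk fun m => (frobeniusEquiv K p).symm (PowerSeries.coeff (p * m + j) g)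

section Diag

variable {n : ℕ} {K : Type*} [Field K] (p : ℕ) [ExpChar K p] [PerfectRing K p]

/-- `diagonal` as a linear map. -/
noncomputable def diagonalLM : MvPowerSeries (Fin n) K →ₗ[K] PowerSeries K where
  toFun := diagonal
  map_add' f g := by
    ext m
    simp [diagonal, map_add]
  map_smul' a f := by
    ext m
    simp [diagonal]

@[simp] lemma diagonalLM_apply (f : MvPowerSeries (Fin n) K) : diagonalLM f = diagonal f := rfl

lemma diagonal_cartierOp (j : ℕ) (f : MvPowerSeries (Fin n) K) :
    diagonal (cartierOp p (Finsupp.equivFunOnFinite.symm fun _ => j) f)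
      = cart1' p j (diagonal f) := by
  ext m
  simp only [diagonal, PowerSeries.coeff_mk, cart1']
  have hidx : (p • (Finsupp.equivFunOnFinite.symm fun _ : Fin n => m)
      + Finsupp.equivFunOnFinite.symm fun _ => j)
      = (Finsupp.equivFunOnFinite.symm fun _ : Fin n => p * m + j) := by
    ext k
    simp [Finsupp.coe_equivFunOnFinite_symm, mul_comm]
  show MvPowerSeries.coeff _ (cartierOp p _ f) = _
  rw [MvPowerSeries.coeff_apply]
  show (frobeniusEquiv K p).symm _ = (frobeniusEquiv K p).symm _
  rw [hidx]

end Diag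

open scoped RatFunc

/-- Proposition 5.1: if `W ⊆ K[[x_1,…,x_n]]` is a `K`-vector space of dimension `d`
invariant under all Cartier operators, then the diagonal of any `f ∈ W` is algebraic
over `K(x)` of degree at most `p^d`. -/
theorem diagonal_algebraic_of_cartier_invariant {n : ℕ} (K : Type*) [Field K]
    (p : ℕ) (hp : p.Prime) [ExpChar K p] [PerfectRing K p] (d : ℕ)
    (W : Submodule K (MvPowerSeries (Fin n) K))
    (hfin : Module.Finite K W) (hdim : Module.finrank K W = d)
    (hinv : ∀ j : Fin n →₀ ℕ, (∀ k, j k < p) → ∀ f ∈ W, cartierOp p j f ∈ W) :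
    ∀ f ∈ W, ∃ P : Polynomial (Polynomial K), P ≠ 0 ∧ P.natDegree ≤ p ^ d ∧
      Polynomial.eval₂ Polynomial.coeToPowerSeries.ringHom (diagonal f) P = 0 := by
  classical
  intro f hf
  haveI hfp : Fact p.Prime := ⟨hp⟩
  haveI hKp : CharP K p := by
    rcases ‹ExpChar K p› with _ | _
    · exact absurd hp Nat.not_prime_one
    · assumption
  haveI : CharP (PowerSeries K) p := charP_of_injective_ringHom PowerSeries.C_injective p
  haveI : CharP (LaurentSeries K) p :=
    charP_of_injective_ringHom (f := HahnSeries.ofPowerSeries ℤ K)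
      HahnSeries.ofPowerSeries_injective p
  haveI : ExpChar (PowerSeries K) p := .prime hp
  haveI : ExpChar (LaurentSeries K) p := .prime hp
  set ι : PowerSeries K →+* LaurentSeries K := HahnSeries.ofPowerSeries ℤ K with hιdef
  -- compatibility of the two maps `K[X] → LaurentSeries K`
  have hcomp : (algebraMap (RatFunc K) (LaurentSeries K)).comp
        (algebraMap (Polynomial K) (RatFunc K))
      = ι.comp Polynomial.coeToPowerSeries.ringHom := by
    apply Polynomial.ringHom_ext
    · intro a
      show algebraMap (RatFunc K) (LaurentSeries K) (algebraMap (Polynomial K) (RatFunc K) _) = ι _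
      rw [← IsScalarTower.algebraMap_apply, Polynomial.algebraMap_hahnSeries_apply,
        Polynomial.coeToPowerSeries.ringHom_apply]
    · show algebraMap (RatFunc K) (LaurentSeries K) (algebraMap (Polynomial K) (RatFunc K) _) = ι _
      rw [← IsScalarTower.algebraMap_apply, Polynomial.algebraMap_hahnSeries_apply,
        Polynomial.coeToPowerSeries.ringHom_apply]
  have hcompat : ∀ q : Polynomial K,
      algebraMap (RatFunc K) (LaurentSeries K) (algebraMap (Polynomial K) (RatFunc K) q)
        = ι ((q : PowerSeries K)) := by
    intro q
    have h := RingHom.congr_fun hcomp q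
    simpa [Polynomial.coeToPowerSeries.ringHom_apply] using h
  -- the chain of spans
  set N : ℕ → Submodule (RatFunc K) (LaurentSeries K) := fun k =>
    Submodule.span (RatFunc K)
      ((fun w => (ι (diagonal w)) ^ (p ^ k)) '' (W : Set (MvPowerSeries (Fin n) K))) with hNdef
  have hchain : ∀ k, N k ≤ N (k + 1) := by
    intro k
    rw [hNdef]
    apply Submodule.span_le.mpr
    rintro _ ⟨w, hw, rfl⟩
    show (ι (diagonal w)) ^ (p ^ k) ∈ N (k + 1)
    have hdec : diagonal w =
        ∑ j ∈ Finset.range p,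
          (diagonal (cartierOp p (Finsupp.equivFunOnFinite.symm fun _ => j) w)) ^ p
            * (PowerSeries.X : PowerSeries K) ^ j := by
      simp_rw [diagonal_cartierOp]
      exact (cart1_decomp p (diagonal w)).symm
    have hX : algebraMap (RatFunc K) (LaurentSeries K) RatFunc.X = ι PowerSeries.X := by
      have h := hcompat Polynomial.X
      rwa [RatFunc.algebraMap_X, Polynomial.coe_X] at h
    have key : (ι (diagonal w)) ^ (p ^ k) = ∑ j ∈ Finset.range p,
        (algebraMap (RatFunc K) (LaurentSeries K) (RatFunc.X ^ (j * p ^ k))) •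
          (ι (diagonal (cartierOp p (Finsupp.equivFunOnFinite.symm fun _ => j) w))) ^ (p ^ (k+1)) := by
      rw [hdec, map_sum]
      rw [sum_pow_char_pow]
      apply Finset.sum_congr rfl
      intro j hj
      rw [map_mul, map_pow, map_pow, mul_pow, ← pow_mul, ← pow_mul]
      rw [Algebra.smul_def, map_pow, hX]
      rw [show p * p ^ k = p ^ (k + 1) by ring]
      simp [Algebra.algebraMap_self_apply, mul_comm]
    rw [key]
    apply Submodule.sum_mem
    intro j hj
    apply Submodule.smul_mem
    apply Submodule.subset_span
    refine ⟨cartierOp p (Finsupp.equivFunOnFinite.symm fun _ => j) w, ?_, rfl⟩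
    apply hinv _ _ _ hw
    intro k'
    simpa using Finset.mem_range.mp hj
  -- basis of W and the bounding span
  let b : Module.Basis (Fin d) K W := Module.finBasisOfFinrankEq K W hdim
  set v : Fin d → LaurentSeries K :=
    fun i => (ι (diagonal ((b i : W) : MvPowerSeries (Fin n) K))) ^ (p ^ d) with hvdef
  set M : Submodule (RatFunc K) (LaurentSeries K) :=
    Submodule.span (RatFunc K) (Set.range v) with hMdef
  have hC : ∀ a : K, algebraMap (RatFunc K) (LaurentSeries K) (RatFunc.C a)
      = ι (PowerSeries.C a) := by
    intro a
    have h := hcompat (Polynomial.C a)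
    rwa [RatFunc.algebraMap_C, Polynomial.coe_C] at h
  have hNdM : N d ≤ M := by
    rw [hNdef]
    apply Submodule.span_le.mpr
    rintro _ ⟨w, hw, rfl⟩
    show (ι (diagonal w)) ^ (p ^ d) ∈ M
    set c : Fin d → K := fun i => b.repr ⟨w, hw⟩ i with hcdef
    have hrepr : w = ∑ i, c i • ((b i : W) : MvPowerSeries (Fin n) K) := by
      have h := b.sum_repr ⟨w, hw⟩
      have h2 := congrArg (W.subtype) h
      simp only [map_sum, map_smul, Submodule.coe_subtype] at h2
      exact h2.symm
    have hdiag : diagonal w = ∑ i, c i • diagonal ((b i : W) : MvPowerSeries (Fin n) K) := by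
      rw [show diagonal w = diagonalLM w from rfl, hrepr, map_sum]
      simp only [map_smul, diagonalLM_apply]
    have key : (ι (diagonal w)) ^ (p ^ d) = ∑ i,
        (algebraMap (RatFunc K) (LaurentSeries K) (RatFunc.C ((c i) ^ (p ^ d)))) • v i := by
      rw [hdiag, map_sum, sum_pow_char_pow]
      apply Finset.sum_congr rfl
      intro i _
      rw [PowerSeries.smul_eq_C_mul, map_mul, mul_pow, Algebra.smul_def, hC, ← map_pow ι,
        ← map_pow PowerSeries.C]
      simp [Algebra.algebraMap_self_apply, hvdef]
    rw [key]
    exact Submodule.sum_mem _ fun i _ =>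
      Submodule.smul_mem _ _ (Submodule.subset_span ⟨i, rfl⟩)
  haveI hMfd : FiniteDimensional (RatFunc K) M :=
    FiniteDimensional.span_of_finite _ (Set.finite_range v)
  have hMrank : Module.finrank (RatFunc K) M ≤ d := by
    rw [hMdef]
    refine (finrank_span_le_card _).trans ?_
    rw [Set.toFinset_card]
    exact (Fintype.card_range_le v).trans (by simp)
  -- the d+1 powers of the diagonal are linearly dependent over K(t)
  have hmem : ∀ i : Fin (d + 1), (ι (diagonal f)) ^ (p ^ (i : ℕ)) ∈ M := by
    intro i
    apply hNdM
    apply (monotone_nat_of_le_succ hchain) (Fin.is_le i)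
    exact Submodule.subset_span ⟨f, hf, rfl⟩
  set u : Fin (d + 1) → M := fun i => ⟨(ι (diagonal f)) ^ (p ^ (i : ℕ)), hmem i⟩ with hudef
  have hcard : ¬ LinearIndependent (RatFunc K) u := by
    intro h
    have h2 := h.fintype_card_le_finrank
    rw [Fintype.card_fin] at h2
    omega
  obtain ⟨c, hsum, i0, hi0⟩ := Fintype.not_linearIndependent_iff.mp hcard
  have hrel : ∑ i, c i • (ι (diagonal f)) ^ (p ^ (i : ℕ)) = 0 := by
    have h2 := congrArg (M.subtype) hsum
    simpa only [map_sum, map_smul, Submodule.coe_subtype, hudef, map_zero] using h2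
  -- clear denominators
  set q : Fin (d + 1) → Polynomial K :=
    fun i => (c i).num * ∏ i' ∈ Finset.univ.erase i, (c i').denom with hqdef
  set D : Polynomial K := ∏ i', (c i').denom with hDdef
  have hnum : ∀ i, algebraMap (Polynomial K) (RatFunc K) (c i).num
      = c i * algebraMap (Polynomial K) (RatFunc K) (c i).denom := by
    intro i
    have h := RatFunc.num_div_denom (c i)
    rw [div_eq_iff (RatFunc.algebraMap_ne_zero (RatFunc.denom_ne_zero (c i)))] at h
    rw [h]
  have hq : ∀ i, algebraMap (Polynomial K) (RatFunc K) (q i)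
      = c i * algebraMap (Polynomial K) (RatFunc K) D := by
    intro i
    rw [hqdef, hDdef]
    simp only [map_mul, map_prod]
    rw [hnum i, ← Finset.mul_prod_erase Finset.univ
      (fun i' => algebraMap (Polynomial K) (RatFunc K) (c i').denom) (Finset.mem_univ i)]
    ring
  have hrelD : ∑ i, (algebraMap (RatFunc K) (LaurentSeries K)
        (algebraMap (Polynomial K) (RatFunc K) (q i))) * (ι (diagonal f)) ^ (p ^ (i : ℕ))
      = 0 := by
    have step : ∀ i : Fin (d + 1), (algebraMap (RatFunc K) (LaurentSeries K)
          (algebraMap (Polynomial K) (RatFunc K) (q i))) * (ι (diagonal f)) ^ (p ^ (i : ℕ))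
        = (algebraMap (RatFunc K) (LaurentSeries K) (algebraMap (Polynomial K) (RatFunc K) D))
            * (c i • (ι (diagonal f)) ^ (p ^ (i : ℕ))) := by
      intro i
      rw [hq i, map_mul, Algebra.smul_def (A := LaurentSeries K)]
      ring
    rw [Finset.sum_congr rfl fun i _ => step i, ← Finset.mul_sum, hrel, mul_zero]
  have hrelPS : ∑ i, ((q i : Polynomial K) : PowerSeries K) * (diagonal f) ^ (p ^ (i : ℕ))
      = 0 := by
    apply HahnSeries.ofPowerSeries_injective (Γ := ℤ) (R := K)
    rw [map_zero, map_sum]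
    rw [← hrelD]
    apply Finset.sum_congr rfl
    intro i _
    rw [map_mul, map_pow, hcompat (q i)]
  -- the polynomial
  refine ⟨∑ i : Fin (d + 1), Polynomial.C (q i) * Polynomial.X ^ (p ^ (i : ℕ)), ?_, ?_, ?_⟩
  · -- nonzero
    have hq0 : q i0 ≠ 0 := by
      rw [hqdef]
      exact mul_ne_zero (RatFunc.num_ne_zero hi0)
        (Finset.prod_ne_zero_iff.mpr fun _ _ => RatFunc.denom_ne_zero _)
    intro hP0
    have hcoeff : (∑ i : Fin (d + 1), Polynomial.C (q i)
        * Polynomial.X ^ (p ^ (i : ℕ))).coeff (p ^ (i0 : ℕ)) = q i0 := by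
      rw [Polynomial.finset_sum_coeff, Finset.sum_eq_single i0]
      · simp [Polynomial.coeff_C_mul, Polynomial.coeff_X_pow]
      · intro i _ hne
        rw [Polynomial.coeff_C_mul, Polynomial.coeff_X_pow, if_neg, mul_zero]
        intro heq
        exact hne (Fin.val_injective (Nat.pow_right_injective hp.two_le heq.symm))
      · simp
    rw [hP0, Polynomial.coeff_zero] at hcoeff
    exact hq0 hcoeff.symm
  · -- degree bound
    apply Polynomial.natDegree_sum_le_of_forall_le
    intro i _
    refine (Polynomial.natDegree_C_mul_le _ _).trans ?_
    rw [Polynomial.natDegree_X_pow]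
    exact Nat.pow_le_pow_right hp.pos (Fin.is_le i)
  · -- evaluation
    rw [Polynomial.eval₂_finset_sum]
    rw [← hrelPS]
    apply Finset.sum_congr rfl
    intro i _
    rw [Polynomial.eval₂_mul, Polynomial.eval₂_C, Polynomial.eval₂_X_pow,
      Polynomial.coeToPowerSeries.ringHom_apply]
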